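/- Let $T$ be a bounded operator on a Banach space $X$. The bilateral shift $B_T$ on $\ell^p(X,\mathbb{Z})$ (or on $c_0(X,\mathbb{Z})$), given by $B_T((x_n)_{n\in\mathbb{Z}}) = (Tx_{n+1})_{n\in\mathbb{Z}}$, is mixing if and only if $T$ is mixing on $X$. -/

import Mathlib

set_option maxHeartbeats 1000000
set_option linter.unusedSectionVars false


open Filter Topology ENNReal

section Defs
variable {Y : Type*} [TopologicalSpace Y]

/-- A map is hypercyclic if some point has dense orbit. -/
def Hypercyclic (f : Y → Y) : Prop := ∃ y : Y, Dense (Set.range fun n : ℕ => f^[n] y)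

/-- Topological transitivity. -/
def TopologicallyTransitive (f : Y → Y) : Prop :=
  ∀ U V : Set Y, IsOpen U → IsOpen V → U.Nonempty → V.Nonempty →
    ∃ n : ℕ, (f^[n] '' U ∩ V).Nonempty

/-- Topological mixing: return sets of pairs of non-empty open sets are cofinite. -/
def TopologicallyMixing (f : Y → Y) : Prop :=
  ∀ U V : Set Y, IsOpen U → IsOpen V → U.Nonempty → V.Nonempty →
    ∃ N : ℕ, ∀ n ≥ N, (f^[n] '' U ∩ V).Nonempty

/-- Weak mixing: `f ⊕ f` is hypercyclic. -/
def WeaklyMixing (f : Y → Y) : Prop := Hypercyclic (fun q : Y × Y => (f q.1, f q.2))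

/-- Chaos in the sense of Devaney: hypercyclic with a dense set of periodic points. -/
def Chaotic (f : Y → Y) : Prop :=
  Hypercyclic f ∧ Dense {y : Y | ∃ d : ℕ, 1 ≤ d ∧ f^[d] y = y}

/-- Lower density of a set of natural numbers. -/
noncomputable def lowerDensity (A : Set ℕ) : ℝ :=
  Filter.liminf
    (fun N : ℕ => (∑ n ∈ Finset.range N, Set.indicator A (fun _ => (1 : ℝ)) n) / N)
    Filter.atTop

/-- Frequent hypercyclicity: some orbit visits every non-empty open set along a set of
positive lower density. -/
def FrequentlyHypercyclic (f : Y → Y) : Prop :=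
  ∃ y : Y, ∀ U : Set Y, IsOpen U → U.Nonempty → 0 < lowerDensity {n : ℕ | f^[n] y ∈ U}

end Defs

/-- The `c₀`-sum of a family of normed spaces, realised as a submodule of `lp E ∞`:
those bounded families whose norms tend to `0` along the cofinite filter. -/
noncomputable def c0Sum {ι : Type*} (E : ι → Type*) [∀ i, NormedAddCommGroup (E i)]
    [∀ i, NormedSpace ℝ (E i)] : Submodule ℝ (lp E ∞) where
  carrier := {x | Tendsto (fun i => ‖(x : ∀ i, E i) i‖) cofinite (nhds 0)}
  add_mem' := by
    intro a b ha hb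
    refine squeeze_zero (fun i => norm_nonneg _) (fun i => ?_) (by simpa using ha.add hb)
    simp only [lp.coeFn_add, Pi.add_apply]
    exact norm_add_le _ _
  zero_mem' := by
    simp only [Set.mem_setOf_eq, lp.coeFn_zero, Pi.zero_apply, norm_zero]
    exact tendsto_const_nhds
  smul_mem' := by
    intro c a ha
    have h : Tendsto (fun i => ‖c‖ * ‖(a : ∀ i, E i) i‖) cofinite (nhds 0) := by
      simpa using ha.const_mul ‖c‖
    refine squeeze_zero (fun i => norm_nonneg _) (fun i => ?_) h
    simp only [lp.coeFn_smul, Pi.smul_apply]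
    exact (norm_smul c _).le

/-- The identity, as a continuous linear map between equal members of a family of spaces. -/
def castL (E : ℤ → Type*) [∀ k, NormedAddCommGroup (E k)] [∀ k, NormedSpace ℝ (E k)]
    {j k : ℤ} (h : j = k) : E j →L[ℝ] E k := by
  subst h; exact ContinuousLinearMap.id ℝ (E j)

/-- The composite `T_{j,j+n} = T_{j+1} ∘ ⋯ ∘ T_{j+n} : E (j+n) → E j` (here `T k` denotes
the operator `E (k+1) → E k`). -/
noncomputable def iterComp {E : ℤ → Type*} [∀ k, NormedAddCommGroup (E k)]
    [∀ k, NormedSpace ℝ (E k)] (T : ∀ k : ℤ, E (k + 1) →L[ℝ] E k) :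
    ∀ (j : ℤ) (n : ℕ), E (j + n) →L[ℝ] E j
  | j, 0 => castL E (by simp)
  | j, (n + 1) => (iterComp T j n).comp ((T (j + n)).comp (castL E (by push_cast; ring)))

section Abstract

variable {X Z : Type*} [NormedAddCommGroup X] [NormedSpace ℝ X]
  [NormedAddCommGroup Z] [NormedSpace ℝ Z]

lemma abstract_mixing (T : X →L[ℝ] X) (B : Z →L[ℝ] Z)
    (π : ℤ → Z →L[ℝ] X) (σ : ℤ → X →L[ℝ] Z)
    (hπnorm : ∀ (k : ℤ) (z : Z), ‖π k z‖ ≤ ‖z‖)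
    (hσnorm : ∀ (k : ℤ) (x : X), ‖σ k x‖ ≤ ‖x‖)
    (hπσ : ∀ (k : ℤ) (x : X), π k (σ k x) = x)
    (hπσ' : ∀ (k l : ℤ) (x : X), k ≠ l → π k (σ l x) = 0)
    (hext : ∀ z z' : Z, (∀ k, π k z = π k z') → z = z')
    (hBc : ∀ (z : Z) (k : ℤ), π k (B z) = T (π (k + 1) z))
    (hdens : ∀ (z : Z) (ε : ℝ), 0 < ε →
      ∃ (F : Finset ℤ) (a : ℤ → X), ‖z - ∑ i ∈ F, σ i (a i)‖ < ε) :
    TopologicallyMixing ⇑B ↔ TopologicallyMixing ⇑T := by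
  have hBpow : ∀ (n : ℕ) (z : Z), (⇑B)^[n] z = (B ^ n) z := by
    intro n z; rw [FunLike.coe_pow_eq_iterate]
  have hTpow : ∀ (n : ℕ) (x : X), (⇑T)^[n] x = (T ^ n) x := by
    intro n x; rw [FunLike.coe_pow_eq_iterate]
  -- coordinates of iterates
  have hiter : ∀ (n : ℕ) (z : Z) (k : ℤ), π k ((B ^ n) z) = (T ^ n) (π (k + n) z) := by
    intro n
    induction n with
    | zero => intro z k; simp
    | succ n ih =>
      intro z k
      have h1 : (B ^ (n + 1)) z = (B ^ n) (B z) := by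
        rw [pow_succ]; rfl
      rw [h1, ih (B z) k, hBc z (k + n)]
      have h2 : (T ^ (n + 1)) (π (k + (n + 1 : ℕ)) z) = (T ^ n) (T (π (k + (n + 1 : ℕ)) z)) := by
        rw [pow_succ]; rfl
      rw [h2]
      congr 2
      push_cast; ring
  have hsingle : ∀ (n : ℕ) (k : ℤ) (x : X),
      (B ^ n) (σ k x) = σ (k - n) ((T ^ n) x) := by
    intro n k x
    apply hext
    intro m
    rw [hiter]
    by_cases hm : m = k - n
    · have h : m + (n : ℤ) = k := by omega
      rw [h, hπσ, hm, hπσ]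
    · rw [hπσ' _ _ _ (by omega), hπσ' _ _ _ hm, map_zero]
  constructor
  · -- B mixing → T mixing
    intro hB U V hUo hVo hUne hVne
    obtain ⟨u, hu⟩ := hUne
    obtain ⟨v, hv⟩ := hVne
    obtain ⟨εu, hεu, hUb⟩ := Metric.isOpen_iff.1 hUo u hu
    obtain ⟨εv, hεv, hVb⟩ := Metric.isOpen_iff.1 hVo v hv
    set ε : ℝ := min εu εv / 2 with hεdef
    have hε : 0 < ε := by positivity
    obtain ⟨N1, hN1⟩ := hB (Metric.ball (σ 0 u) ε) (Metric.ball (0 : Z) ε)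
      Metric.isOpen_ball Metric.isOpen_ball ⟨_, Metric.mem_ball_self hε⟩
      ⟨_, Metric.mem_ball_self hε⟩
    obtain ⟨N2, hN2⟩ := hB (Metric.ball (0 : Z) ε) (Metric.ball (σ 0 v) ε)
      Metric.isOpen_ball Metric.isOpen_ball ⟨_, Metric.mem_ball_self hε⟩
      ⟨_, Metric.mem_ball_self hε⟩
    refine ⟨max N1 N2, fun n hn => ?_⟩
    obtain ⟨_, ⟨x, hx, rfl⟩, hx2⟩ := hN1 n (le_trans (le_max_left _ _) hn)
    obtain ⟨_, ⟨y, hy, rfl⟩, hy2⟩ := hN2 n (le_trans (le_max_right _ _) hn)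
    rw [Metric.mem_ball, dist_eq_norm] at hx hy
    rw [Metric.mem_ball, dist_eq_norm, hBpow] at hx2 hy2
    set un := π 0 x with hun
    set wn := π (n : ℤ) y with hwn
    have h1 : ‖un - u‖ < ε := by
      have e : un - u = π 0 (x - σ 0 u) := by rw [map_sub, hπσ]
      rw [e]
      exact lt_of_le_of_lt (hπnorm _ _) hx
    have h2 : ‖(T ^ n) un‖ < ε := by
      have e : (T ^ n) un = π (-(n : ℤ)) ((B ^ n) x) := by
        have h0 : -(n : ℤ) + n = 0 := by omega
        rw [hiter, h0]
      rw [e]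
      refine lt_of_le_of_lt (hπnorm _ _) ?_
      simpa using hx2
    have h3 : ‖wn‖ < ε := by
      refine lt_of_le_of_lt (hπnorm _ _) ?_
      simpa using hy
    have h4 : ‖(T ^ n) wn - v‖ < ε := by
      have e : (T ^ n) wn - v = π 0 ((B ^ n) y - σ 0 v) := by
        have h0 : (0 : ℤ) + n = n := by omega
        rw [map_sub, hπσ, hiter, h0]
      rw [e]
      exact lt_of_le_of_lt (hπnorm _ _) hy2
    refine ⟨(⇑T)^[n] (un + wn), ⟨un + wn, ?_, rfl⟩, ?_⟩
    · apply hUb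
      rw [Metric.mem_ball, dist_eq_norm]
      calc ‖un + wn - u‖ = ‖(un - u) + wn‖ := by rw [add_sub_right_comm]
        _ ≤ ‖un - u‖ + ‖wn‖ := norm_add_le _ _
        _ < ε + ε := by linarith
        _ ≤ εu := by rw [hεdef]; have := min_le_left εu εv; linarith
    · apply hVb
      rw [Metric.mem_ball, dist_eq_norm, hTpow, map_add]
      calc ‖(T ^ n) un + (T ^ n) wn - v‖ = ‖(T ^ n) un + ((T ^ n) wn - v)‖ := by rw [add_sub_assoc]
        _ ≤ ‖(T ^ n) un‖ + ‖(T ^ n) wn - v‖ := norm_add_le _ _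
        _ < ε + ε := by linarith
        _ ≤ εv := by rw [hεdef]; have := min_le_right εu εv; linarith
  · -- T mixing → B mixing
    intro hT U V hUo hVo hUne hVne
    obtain ⟨u, hu⟩ := hUne
    obtain ⟨v, hv⟩ := hVne
    obtain ⟨εu, hεu, hUb⟩ := Metric.isOpen_iff.1 hUo u hu
    obtain ⟨εv, hεv, hVb⟩ := Metric.isOpen_iff.1 hVo v hv
    set ε : ℝ := min εu εv / 4 with hεdef
    have hε : 0 < ε := by positivity
    obtain ⟨F, a, hFa⟩ := hdens u ε hε
    obtain ⟨G, b, hGb⟩ := hdens v ε hε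
    set η : ℝ := ε / (F.card + 1) with hηdef
    set η' : ℝ := ε / (G.card + 1) with hη'def
    have hη : 0 < η := by positivity
    have hη' : 0 < η' := by positivity
    have hcardF : (F.card : ℝ) * η ≤ ε := by
      rw [hηdef]
      have h1 : (F.card : ℝ) ≤ F.card + 1 := by linarith
      calc (F.card : ℝ) * (ε / (F.card + 1))
          ≤ ((F.card : ℝ) + 1) * (ε / (F.card + 1)) :=
            mul_le_mul_of_nonneg_right h1 (by positivity)
        _ = ε := by field_simp
    have hcardG : (G.card : ℝ) * η' ≤ ε := by
      rw [hη'def]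
      have h1 : (G.card : ℝ) ≤ G.card + 1 := by linarith
      calc (G.card : ℝ) * (ε / (G.card + 1))
          ≤ ((G.card : ℝ) + 1) * (ε / (G.card + 1)) :=
            mul_le_mul_of_nonneg_right h1 (by positivity)
        _ = ε := by field_simp
    -- bound for sums of singles
    have hbound : ∀ (S : Finset ℤ) (ι : ℤ → ℤ) (d : ℤ → X) (e : ℝ),
        (∀ i ∈ S, ‖d i‖ ≤ e) → ‖∑ i ∈ S, σ (ι i) (d i)‖ ≤ S.card * e := by
      intro S ι d e hd
      calc ‖∑ i ∈ S, σ (ι i) (d i)‖ ≤ ∑ i ∈ S, ‖σ (ι i) (d i)‖ := norm_sum_le _ _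
        _ ≤ S.card • e := Finset.sum_le_card_nsmul S _ e
            (fun i hi => le_trans (hσnorm _ _) (hd i hi))
        _ = S.card * e := by rw [nsmul_eq_mul]
    have hF1 : ∀ i : ℤ, ∃ N : ℕ, ∀ n ≥ N, ∃ c : X, ‖c - a i‖ < η ∧ ‖(T ^ n) c‖ < η := by
      intro i
      obtain ⟨N, hN⟩ := hT (Metric.ball (a i) η) (Metric.ball (0 : X) η)
        Metric.isOpen_ball Metric.isOpen_ball ⟨_, Metric.mem_ball_self hη⟩
        ⟨_, Metric.mem_ball_self hη⟩
      refine ⟨N, fun n hn => ?_⟩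
      obtain ⟨_, ⟨c, hc, rfl⟩, hc2⟩ := hN n hn
      rw [Metric.mem_ball, dist_eq_norm] at hc
      rw [Metric.mem_ball, dist_eq_norm, hTpow] at hc2
      exact ⟨c, hc, by simpa using hc2⟩
    have hG1 : ∀ j : ℤ, ∃ N : ℕ, ∀ n ≥ N, ∃ w : X, ‖w‖ < η' ∧ ‖(T ^ n) w - b j‖ < η' := by
      intro j
      obtain ⟨N, hN⟩ := hT (Metric.ball (0 : X) η') (Metric.ball (b j) η')
        Metric.isOpen_ball Metric.isOpen_ball ⟨_, Metric.mem_ball_self hη'⟩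
        ⟨_, Metric.mem_ball_self hη'⟩
      refine ⟨N, fun n hn => ?_⟩
      obtain ⟨_, ⟨w, hw, rfl⟩, hw2⟩ := hN n hn
      rw [Metric.mem_ball, dist_eq_norm] at hw
      rw [Metric.mem_ball, dist_eq_norm, hTpow] at hw2
      exact ⟨w, by simpa using hw, hw2⟩
    choose NF hNF using hF1
    choose NG hNG using hG1
    refine ⟨max (F.sup NF) (G.sup NG), fun n hn => ?_⟩
    have hc' : ∀ i : ℤ, ∃ c : X, i ∈ F → (‖c - a i‖ < η ∧ ‖(T ^ n) c‖ < η) := by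
      intro i
      by_cases hi : i ∈ F
      · obtain ⟨c, hc⟩ := hNF i n (le_trans (le_trans (Finset.le_sup hi) (le_max_left _ _)) hn)
        exact ⟨c, fun _ => hc⟩
      · exact ⟨0, fun h => absurd h hi⟩
    have hw' : ∀ j : ℤ, ∃ w : X, j ∈ G → (‖w‖ < η' ∧ ‖(T ^ n) w - b j‖ < η') := by
      intro j
      by_cases hj : j ∈ G
      · obtain ⟨w, hw⟩ := hNG j n (le_trans (le_trans (Finset.le_sup hj) (le_max_right _ _)) hn)
        exact ⟨w, fun _ => hw⟩
      · exact ⟨0, fun h => absurd h hj⟩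
    choose cc hcc using hc'
    choose ww hww using hw'
    set z : Z := (∑ i ∈ F, σ i (cc i)) + (∑ j ∈ G, σ (j + n) (ww j)) with hzdef
    have hz1 : z - u = (∑ i ∈ F, σ i (cc i - a i)) + (∑ j ∈ G, σ (j + n) (ww j))
        - (u - ∑ i ∈ F, σ i (a i)) := by
      rw [hzdef]
      simp only [map_sub, Finset.sum_sub_distrib]
      abel
    have hzU : z ∈ U := by
      apply hUb
      rw [Metric.mem_ball, dist_eq_norm, hz1]
      have e1 : ‖∑ i ∈ F, σ i (cc i - a i)‖ ≤ F.card * η :=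
        hbound F id _ η (fun i hi => le_of_lt ((hcc i hi).1))
      have e2 : ‖∑ j ∈ G, σ (j + n) (ww j)‖ ≤ G.card * η' :=
        hbound G (fun j => j + n) _ η' (fun j hj => le_of_lt ((hww j hj).1))
      calc ‖(∑ i ∈ F, σ i (cc i - a i)) + (∑ j ∈ G, σ (j + n) (ww j))
            - (u - ∑ i ∈ F, σ i (a i))‖
          ≤ ‖(∑ i ∈ F, σ i (cc i - a i)) + (∑ j ∈ G, σ (j + n) (ww j))‖
            + ‖u - ∑ i ∈ F, σ i (a i)‖ := norm_sub_le _ _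
        _ ≤ ‖∑ i ∈ F, σ i (cc i - a i)‖ + ‖∑ j ∈ G, σ (j + n) (ww j)‖
            + ‖u - ∑ i ∈ F, σ i (a i)‖ := by
              have := norm_add_le (∑ i ∈ F, σ i (cc i - a i)) (∑ j ∈ G, σ (j + n) (ww j))
              linarith
        _ < ε + ε + ε := by linarith
        _ ≤ εu := by rw [hεdef]; have := min_le_left εu εv; linarith
    have hBz : (B ^ n) z = (∑ i ∈ F, σ (i - n) ((T ^ n) (cc i)))
        + (∑ j ∈ G, σ j ((T ^ n) (ww j))) := by
      rw [hzdef, map_add, map_sum, map_sum]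
      congr 1
      · exact Finset.sum_congr rfl (fun i _ => hsingle n i (cc i))
      · refine Finset.sum_congr rfl (fun j _ => ?_)
        rw [hsingle n (j + n) (ww j), add_sub_cancel_right]
    have hz2 : (B ^ n) z - v = (∑ i ∈ F, σ (i - n) ((T ^ n) (cc i)))
        + (∑ j ∈ G, σ j ((T ^ n) (ww j) - b j)) - (v - ∑ j ∈ G, σ j (b j)) := by
      rw [hBz]
      simp only [map_sub, Finset.sum_sub_distrib]
      abel
    have hzV : (⇑B)^[n] z ∈ V := by
      apply hVb
      rw [Metric.mem_ball, dist_eq_norm, hBpow, hz2]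
      have e1 : ‖∑ i ∈ F, σ (i - n) ((T ^ n) (cc i))‖ ≤ F.card * η :=
        hbound F (fun i => i - n) _ η (fun i hi => le_of_lt ((hcc i hi).2))
      have e2 : ‖∑ j ∈ G, σ j ((T ^ n) (ww j) - b j)‖ ≤ G.card * η' :=
        hbound G id _ η' (fun j hj => le_of_lt ((hww j hj).2))
      calc ‖(∑ i ∈ F, σ (i - n) ((T ^ n) (cc i)))
            + (∑ j ∈ G, σ j ((T ^ n) (ww j) - b j)) - (v - ∑ j ∈ G, σ j (b j))‖
          ≤ ‖(∑ i ∈ F, σ (i - n) ((T ^ n) (cc i)))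
            + (∑ j ∈ G, σ j ((T ^ n) (ww j) - b j))‖
            + ‖v - ∑ j ∈ G, σ j (b j)‖ := norm_sub_le _ _
        _ ≤ ‖∑ i ∈ F, σ (i - n) ((T ^ n) (cc i))‖
            + ‖∑ j ∈ G, σ j ((T ^ n) (ww j) - b j)‖
            + ‖v - ∑ j ∈ G, σ j (b j)‖ := by
              have := norm_add_le (∑ i ∈ F, σ (i - n) ((T ^ n) (cc i)))
                (∑ j ∈ G, σ j ((T ^ n) (ww j) - b j))
              linarith
        _ < ε + ε + ε := by linarith
        _ ≤ εv := by rw [hεdef]; have := min_le_right εu εv; linarith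
    exact ⟨(⇑B)^[n] z, ⟨z, hzU, rfl⟩, hzV⟩

end Abstract

section Inst

variable {X : Type*} [NormedAddCommGroup X] [NormedSpace ℝ X]

/-- coordinate projection on `lp`. -/
noncomputable def lpProj (p : ℝ≥0∞) [Fact (1 ≤ p)] (hp : p ≠ 0) (k : ℤ) :
    lp (fun _ : ℤ => X) p →L[ℝ] X :=
  LinearMap.mkContinuous
    { toFun := fun f => f k
      map_add' := fun f g => rfl
      map_smul' := fun c f => rfl } 1
    (fun f => by rw [one_mul]; exact lp.norm_apply_le_norm hp f k)

@[simp] lemma lpProj_apply (p : ℝ≥0∞) [Fact (1 ≤ p)] (hp : p ≠ 0) (k : ℤ)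
    (f : lp (fun _ : ℤ => X) p) : lpProj p hp k f = f k := rfl

lemma lp_single_add (p : ℝ≥0∞) (k : ℤ) (x y : X) :
    lp.single p k (x + y) = lp.single (E := fun _ : ℤ => X) p k x + lp.single p k y := by
  apply lp.ext
  funext j
  by_cases h : j = k
  · subst h
    simp only [lp.coeFn_add, Pi.add_apply]
    rw [lp.single_apply_self, lp.single_apply_self, lp.single_apply_self]
  · simp only [lp.coeFn_add, Pi.add_apply]
    rw [lp.single_apply_ne p k _ h, lp.single_apply_ne p k _ h, lp.single_apply_ne p k _ h]
    simp

lemma lp_norm_single_le (p : ℝ≥0∞) [Fact (1 ≤ p)] (k : ℤ) (x : X) :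
    ‖lp.single (E := fun _ : ℤ => X) p k x‖ ≤ ‖x‖ := by
  by_cases hp : p = ∞
  · subst hp
    refine lp.norm_le_of_forall_le (norm_nonneg x) ?_
    intro j
    by_cases h : j = k
    · subst h; rw [lp.single_apply_self]
    · rw [lp.single_apply_ne _ _ _ h]; simp
  · have hpt : 0 < p.toReal :=
      ENNReal.toReal_pos (zero_lt_one.trans_le Fact.out).ne' hp
    exact le_of_eq (lp.norm_single (E := fun _ : ℤ => X) (p := p) (zero_lt_one.trans_le (Fact.out : (1 : ℝ≥0∞) ≤ p)) k x)

/-- single insertion on `lp`, as a continuous linear map -/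
noncomputable def lpSingleL (p : ℝ≥0∞) [Fact (1 ≤ p)] (k : ℤ) :
    X →L[ℝ] lp (fun _ : ℤ => X) p :=
  LinearMap.mkContinuous
    { toFun := fun x => lp.single p k x
      map_add' := lp_single_add p k
      map_smul' := fun c x => by simpa using lp.single_smul p k x c } 1
    (fun x => by simpa using lp_norm_single_le p k x)

@[simp] lemma lpSingleL_apply (p : ℝ≥0∞) [Fact (1 ≤ p)] (k : ℤ) (x : X) :
    lpSingleL p k x = lp.single (E := fun _ : ℤ => X) p k x := rfl

lemma single_mem_c0 (k : ℤ) (x : X) :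
    lp.single (E := fun _ : ℤ => X) ∞ k x ∈ c0Sum (fun _ : ℤ => X) := by
  have h : {j : ℤ | ¬ ‖(lp.single (E := fun _ : ℤ => X) ∞ k x : ℤ → X) j‖ = 0}.Finite := by
    apply (Set.finite_singleton k).subset
    intro j hj
    simp only [Set.mem_setOf_eq] at hj
    by_contra hjk
    rw [Set.mem_singleton_iff] at hjk
    exact hj (by rw [lp.single_apply_ne _ _ _ hjk]; simp)
  exact tendsto_const_nhds.congr'
    (by filter_upwards [Filter.eventually_cofinite.2 h] with j hj; exact hj.symm)

/-- single insertion into the c₀ sum -/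
noncomputable def c0SingleL (k : ℤ) : X →L[ℝ] ↥(c0Sum (fun _ : ℤ => X)) :=
  LinearMap.mkContinuous
    { toFun := fun x => ⟨lp.single ∞ k x, single_mem_c0 k x⟩
      map_add' := fun x y => Subtype.ext (lp_single_add ∞ k x y)
      map_smul' := fun c x => Subtype.ext (by simpa using lp.single_smul ∞ k x c) }
    1 (fun x => by
      rw [one_mul]
      show ‖lp.single (E := fun _ : ℤ => X) ∞ k x‖ ≤ ‖x‖
      exact lp_norm_single_le ∞ k x)

@[simp] lemma c0SingleL_coe (k : ℤ) (x : X) :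
    ((c0SingleL k x : ↥(c0Sum (fun _ : ℤ => X))) : lp (fun _ : ℤ => X) ∞)
      = lp.single ∞ k x := rfl

noncomputable def c0Proj (k : ℤ) : ↥(c0Sum (fun _ : ℤ => X)) →L[ℝ] X :=
  LinearMap.mkContinuous
    { toFun := fun z => ((z : lp (fun _ : ℤ => X) ∞) : ℤ → X) k
      map_add' := fun f g => rfl
      map_smul' := fun c f => rfl } 1
    (fun z => by
      rw [one_mul]; exact lp.norm_apply_le_norm (by simp : (∞ : ℝ≥0∞) ≠ 0)
        (z : lp (fun _ : ℤ => X) ∞) k)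

@[simp] lemma c0Proj_apply (k : ℤ) (z : ↥(c0Sum (fun _ : ℤ => X))) :
    c0Proj k z = ((z : lp (fun _ : ℤ => X) ∞) : ℤ → X) k := rfl

-- density of finitely supported elements in lp, p ≠ ∞
lemma lp_dens (p : ℝ≥0∞) [Fact (1 ≤ p)] (hp : p ≠ ∞)
    (z : lp (fun _ : ℤ => X) p) (ε : ℝ) (hε : 0 < ε) :
    ∃ (F : Finset ℤ) (a : ℤ → X), ‖z - ∑ i ∈ F, lpSingleL p i (a i)‖ < ε := by
  have hs := lp.hasSum_single hp z
  rw [HasSum] at hs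
  have := (Metric.tendsto_nhds.1 hs) ε hε
  obtain ⟨F, hF⟩ := (Filter.eventually_atTop).1 this
  refine ⟨F, fun i => z i, ?_⟩
  have := hF F le_rfl
  rw [dist_eq_norm] at this
  simpa [norm_sub_rev] using this

-- density of finitely supported elements in c0
lemma c0_dens (z : ↥(c0Sum (fun _ : ℤ => X))) (ε : ℝ) (hε : 0 < ε) :
    ∃ (F : Finset ℤ) (a : ℤ → X), ‖z - ∑ i ∈ F, c0SingleL i (a i)‖ < ε := by
  have hz : Tendsto (fun i => ‖((z : lp (fun _ : ℤ => X) ∞) : ℤ → X) i‖) cofinite (nhds 0) :=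
    z.2
  have hev : ∀ᶠ i in cofinite, ‖((z : lp (fun _ : ℤ => X) ∞) : ℤ → X) i‖ < ε / 2 :=
    hz (gt_mem_nhds (by linarith))
  have hfin := Filter.eventually_cofinite.1 hev
  refine ⟨hfin.toFinset, fun i => ((z : lp (fun _ : ℤ => X) ∞) : ℤ → X) i, ?_⟩
  have hcoe : ((z - ∑ i ∈ hfin.toFinset, c0SingleL i
        (((z : lp (fun _ : ℤ => X) ∞) : ℤ → X) i) : ↥(c0Sum (fun _ : ℤ => X)))
        : lp (fun _ : ℤ => X) ∞)
      = (z : lp (fun _ : ℤ => X) ∞) - ∑ i ∈ hfin.toFinset,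
          lp.single ∞ i (((z : lp (fun _ : ℤ => X) ∞) : ℤ → X) i) := by
    push_cast
    rfl
  have hle : ‖(z : lp (fun _ : ℤ => X) ∞) - ∑ i ∈ hfin.toFinset,
      lp.single ∞ i (((z : lp (fun _ : ℤ => X) ∞) : ℤ → X) i)‖ ≤ ε / 2 := by
    refine lp.norm_le_of_forall_le (by linarith) ?_
    intro j
    rw [lp.coeFn_sub, Pi.sub_apply, lp.coeFn_sum, Finset.sum_apply]
    simp only [lp.single_apply]
    rw [Finset.sum_pi_single]
    by_cases hj : j ∈ hfin.toFinset
    · rw [if_pos hj]; simp; linarith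
    · rw [if_neg hj, sub_zero]
      have : ¬ j ∈ {i : ℤ | ¬ ‖((z : lp (fun _ : ℤ => X) ∞) : ℤ → X) i‖ < ε / 2} := by
        simpa using hj
      simp only [Set.mem_setOf_eq, not_not] at this
      exact this.le
  calc ‖z - ∑ i ∈ hfin.toFinset, c0SingleL i (((z : lp (fun _ : ℤ => X) ∞) : ℤ → X) i)‖
      = ‖(z : lp (fun _ : ℤ => X) ∞) - ∑ i ∈ hfin.toFinset,
          lp.single ∞ i (((z : lp (fun _ : ℤ => X) ∞) : ℤ → X) i)‖ := by rw [← hcoe]; rfl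
    _ ≤ ε / 2 := hle
    _ < ε := by linarith

end Inst

/-- the bilateral shift `B_T` on `ℓ^p(X,ℤ)` (or `c₀(X,ℤ)`) is mixing iff
`T` is mixing on `X`. -/
theorem stmt_7 {X : Type*} [NormedAddCommGroup X] [NormedSpace ℝ X] [CompleteSpace X]
    (T : X →L[ℝ] X) (p : ℝ≥0∞) [Fact (1 ≤ p)] (hp : p ≠ ∞) :
    (∀ B : lp (fun _ : ℤ => X) p →L[ℝ] lp (fun _ : ℤ => X) p,
      (∀ (x : lp (fun _ : ℤ => X) p) (n : ℤ),
        (B x : ℤ → X) n = T ((x : ℤ → X) (n + 1))) →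
      (TopologicallyMixing ⇑B ↔ TopologicallyMixing ⇑T))
    ∧ (∀ B : c0Sum (fun _ : ℤ => X) →L[ℝ] c0Sum (fun _ : ℤ => X),
      (∀ (x : c0Sum (fun _ : ℤ => X)) (n : ℤ),
        ((B x : lp (fun _ : ℤ => X) ∞) : ℤ → X) n
          = T (((x : lp (fun _ : ℤ => X) ∞) : ℤ → X) (n + 1))) →
      (TopologicallyMixing ⇑B ↔ TopologicallyMixing ⇑T)) := by
  
  have hp0 : p ≠ 0 := (zero_lt_one.trans_le Fact.out).ne'
  constructor
  · intro B hBc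
    refine abstract_mixing T B (lpProj p hp0) (lpSingleL p) ?_ ?_ ?_ ?_ ?_ ?_ ?_
    · intro k z
      simpa using lp.norm_apply_le_norm hp0 z k
    · intro k x
      simpa using lp_norm_single_le p k x
    · intro k x
      show lp.single (E := fun _ : ℤ => X) p k x k = x
      exact lp.single_apply_self (E := fun _ : ℤ => X) p k x
    · intro k l x hkl
      show lp.single (E := fun _ : ℤ => X) p l x k = 0
      exact lp.single_apply_ne (E := fun _ : ℤ => X) p l x hkl
    · intro z z' h
      exact lp.ext (funext fun k => h k)
    · intro z k
      exact hBc z k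
    · exact lp_dens p hp
  · intro B hBc
    refine abstract_mixing T B c0Proj c0SingleL ?_ ?_ ?_ ?_ ?_ ?_ ?_
    · intro k z
      simpa using lp.norm_apply_le_norm (by simp : (∞ : ℝ≥0∞) ≠ 0)
        (z : lp (fun _ : ℤ => X) ∞) k
    · intro k x
      show ‖lp.single (E := fun _ : ℤ => X) ∞ k x‖ ≤ ‖x‖
      exact lp_norm_single_le ∞ k x
    · intro k x
      show lp.single (E := fun _ : ℤ => X) ∞ k x k = x
      exact lp.single_apply_self (E := fun _ : ℤ => X) ∞ k x
    · intro k l x hkl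
      show lp.single (E := fun _ : ℤ => X) ∞ l x k = 0
      exact lp.single_apply_ne (E := fun _ : ℤ => X) ∞ l x hkl
    · intro z z' h
      exact Subtype.ext (lp.ext (funext fun k => h k))
    · intro z k
      exact hBc z k
    · exact c0_dens
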